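/- Let $p$ be prime, $N \geq 0$, and let $J_1, \dots, J_l, M$ be square matrices over $\mathbb{Z}/p^{N+1}\mathbb{Z}$ of sizes $n_1, \dots, n_l, n_{l+1}$ with $n = n_1 + \cdots + n_{l+1}$. Let $R_j = (\mathbb{Z}/p^{N+1}\mathbb{Z})[t]/(P_j(t))$ for monic $P_j$, and suppose for $i \neq j$ that $J_i - \bar{t}\,\mathrm{id}$ and $M - \bar{t}\,\mathrm{id}$ are invertible over $R_j$. Then for any matrix $X$ over $\mathbb{Z}/p^{N+1}\mathbb{Z}$ whose block decomposition is $X = D + pE$ with $D = \mathrm{diag}(J_1, \dots, J_l, M)$ and $E$ arbitrary, there exist invertible matrices over $R_j$ transforming $X - \bar{t}I_n$ into a block diagonal matrix whose $j$-th block is $pA_{jj} + J_j - \bar{t}\,\mathrm{id} + p^2 B + \bar{t} p^2 C$ for some matrices $B, C$ over $\mathbb{Z}/p^{N+1}\mathbb{Z}$, and whose other blocks are invertible over $R_j$; consequently $\mathrm{cok}_{R_j}(X - \bar{t}I_n) \simeq \mathrm{cok}_{R_j}(pA_{jj} + J_j - \bar{t}\,\mathrm{id} + p^2 B + \bar{t}p^2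 C)$. -/

import Mathlib

open Matrix

lemma aux_isUnit_add_nilpotent_smul {R : Type*} [CommRing R] {n : Type*} [Fintype n]
    [DecidableEq n] {π : R} (hπ : IsNilpotent π) (M E : Matrix n n R) (hM : IsUnit M) :
    IsUnit (M + π • E) := by
  obtain ⟨u, hu⟩ := hM
  have key : M + π • E = M * (1 + π • ((u⁻¹ : Units _) * E)) := by
    rw [mul_add, mul_one, mul_smul_comm, ← mul_assoc, ← hu, Units.mul_inv, one_mul]
  rw [key]
  refine IsUnit.mul ⟨u, hu⟩ ?_
  have hnil : IsNilpotent (π • ((u⁻¹ : Units _) * E : Matrix n n R)) := by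
    obtain ⟨m, hm⟩ := hπ
    exact ⟨m, by rw [smul_pow, hm, zero_smul]⟩
  exact hnil.isUnit_one_add

/-- linear equivalence from a unit matrix -/
noncomputable def aux_linEquivOfUnit {R : Type*} [CommRing R] {n : Type*} [Fintype n]
    [DecidableEq n] {U : Matrix n n R} (hU : IsUnit U) : (n → R) ≃ₗ[R] (n → R) :=
  LinearEquiv.ofLinear U.mulVecLin ((hU.unit⁻¹ : Units _) : Matrix n n R).mulVecLin
    (by rw [← Matrix.mulVecLin_mul, IsUnit.mul_val_inv, Matrix.mulVecLin_one])
    (by rw [← Matrix.mulVecLin_mul, IsUnit.val_inv_mul, Matrix.mulVecLin_one])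

lemma aux_coker_equiv {R : Type*} [CommRing R] {n : Type*} [Fintype n] [DecidableEq n]
    (M U V W : Matrix n n R) (hU : IsUnit U) (hV : IsUnit V) (h : U * M * V = W) :
    Nonempty (((n → R) ⧸ LinearMap.range M.mulVecLin) ≃ₗ[R]
      ((n → R) ⧸ LinearMap.range W.mulVecLin)) := by
  refine ⟨Submodule.Quotient.equiv _ _ (aux_linEquivOfUnit hU) ?_⟩
  have hVr : LinearMap.range V.mulVecLin = ⊤ := (aux_linEquivOfUnit hV).range
  have h1 : LinearMap.range (M * V).mulVecLin = LinearMap.range M.mulVecLin := by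
    rw [Matrix.mulVecLin_mul, LinearMap.range_comp, hVr, Submodule.map_top]
  have h2 : W.mulVecLin = U.mulVecLin ∘ₗ (M * V).mulVecLin := by
    rw [← Matrix.mulVecLin_mul, mul_assoc] at *
    rw [← h]
  rw [h2, LinearMap.range_comp, h1]
  rfl

lemma aux_stepB {R : Type*} [CommRing R] {n : Type*} [Fintype n] [DecidableEq n]
    (π τ : R) (mm : ℕ) (K Cm g0 L G' : Matrix n n R) :
    ((K + τ • (π^2 • Cm) - τ • 1) + π^(mm+2) • (g0 + τ • L) + π^(mm+3) • G')
        * (1 + π^(mm+2) • L)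
    = (K + τ • (π^2 • Cm) - τ • 1) + π^(mm+2) • (g0 + K * L)
      + π^(mm+3) • (G' + π • (τ • (Cm * L)) + π^(mm+1) • ((g0 + τ • L) * L)
          + π^(mm+2) • (G' * L)) := by
  simp only [add_mul, sub_mul, mul_add, mul_one, one_mul, smul_mul_assoc, mul_smul_comm,
    smul_add, smul_sub, smul_smul]
  module


/-- the canonical "form" `A₀ - τ + π²B + τπ²C` (mapped along `σ`). -/
def auxForm {S R : Type*} [CommRing S] [CommRing R] {n : Type*} [Fintype n] [DecidableEq n]
    (σ : S →+* R) (τ π : R) (A₀ B C : Matrix n n S) : Matrix n n R :=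
  (A₀.map σ + π^2 • B.map σ) + τ • (π^2 • C.map σ) - τ • 1

lemma aux_claim {S R : Type*} [CommRing S] [CommRing R] {n : Type*} [Fintype n] [DecidableEq n]
    (σ : S →+* R) (τ π : R) (pS : S) (hπdef : π = σ pS)
    (ν : ℕ) (hν : 1 ≤ ν) (hnil : π ^ ν = 0)
    (hgen : ∀ r : R, ∃ q : Polynomial S, r = q.eval₂ σ τ)
    (A₀ : Matrix n n S) :
    ∀ (m : ℕ), 2 ≤ m → ∀ (B C : Matrix n n S) (G : Matrix n n R),
      ∃ (B' C' : Matrix n n S) (u v : Matrix n n R), IsUnit u ∧ IsUnit v ∧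
        u * (auxForm σ τ π A₀ B C + π^m • G) * v = auxForm σ τ π A₀ B' C' := by
  have mapsmul : ∀ (c : S) (A : Matrix n n S), (c • A).map σ = σ c • A.map σ := by
    intro c A; ext a b; simp [Matrix.map_apply]
  have mapadd : ∀ (A B : Matrix n n S), (A + B).map σ = A.map σ + B.map σ := by
    intro A B; ext a b; simp [Matrix.map_apply]
  have hunit : ∀ (m : ℕ), 1 ≤ m → ∀ X : Matrix n n R, IsUnit (1 + π^m • X) := by
    intro m hm X
    have hn : IsNilpotent (π ^ m) := ⟨ν, by
      rw [← pow_mul, mul_comm, pow_mul, hnil, zero_pow (by omega)]⟩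
    simpa using aux_isUnit_add_nilpotent_smul hn 1 X isUnit_one
  have hrep : ∀ Gm : Matrix n n R, ∃ (d : ℕ) (g : Fin d → Matrix n n S),
      Gm = ∑ i : Fin d, τ ^ (i : ℕ) • (g i).map σ := by
    intro Gm
    choose q hq using fun a b => hgen (Gm a b)
    refine ⟨(Finset.univ.sup fun ab : n × n => (q ab.1 ab.2).natDegree) + 1,
      fun i => Matrix.of fun a b => (q a b).coeff i, ?_⟩
    ext a b
    have hdeg : (q a b).natDegree <
        (Finset.univ.sup fun ab : n × n => (q ab.1 ab.2).natDegree) + 1 :=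
      Nat.lt_succ_of_le (Finset.le_sup (f := fun ab : n × n => (q ab.1 ab.2).natDegree)
        (Finset.mem_univ (a, b)))
    rw [Matrix.sum_apply, hq a b, Polynomial.eval₂_eq_sum_range' σ hdeg τ,
      ← Fin.sum_univ_eq_sum_range]
    refine Finset.sum_congr rfl fun i _ => ?_
    simp [Matrix.map_apply, mul_comm]
  have main : ∀ (K m : ℕ), ν ≤ m + K → 2 ≤ m → ∀ (B C : Matrix n n S) (G : Matrix n n R),
      ∃ (B' C' : Matrix n n S) (u v : Matrix n n R), IsUnit u ∧ IsUnit v ∧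
        u * (auxForm σ τ π A₀ B C + π^m • G) * v = auxForm σ τ π A₀ B' C' := by
    intro K
    induction K with
    | zero =>
      intro m hνm hm B C G
      have hz : π ^ m = 0 := by
        have h2 : π ^ m = π ^ ν * π ^ (m - ν) := by rw [← pow_add]; congr 1; omega
        rw [h2, hnil, zero_mul]
      exact ⟨B, C, 1, 1, isUnit_one, isUnit_one, by rw [hz]; simp⟩
    | succ K ih =>
      intro m hνm hm B C G
      obtain ⟨mm, rfl⟩ : ∃ mm, m = mm + 2 := ⟨m - 2, by omega⟩
      have step : ∀ (d : ℕ) (B C : Matrix n n S) (g : Fin d → Matrix n n S)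
          (G' : Matrix n n R),
          ∃ (B' C' : Matrix n n S) (G'' : Matrix n n R) (u v : Matrix n n R),
            IsUnit u ∧ IsUnit v ∧
            u * (auxForm σ τ π A₀ B C + π^(mm+2) • (∑ i : Fin d, τ ^ (i : ℕ) • (g i).map σ)
                + π^(mm+3) • G') * v
              = auxForm σ τ π A₀ B' C' + π^(mm+3) • G'' := by
        intro d
        induction d with
        | zero =>
          intro B C g G'
          exact ⟨B, C, G', 1, 1, isUnit_one, isUnit_one, by simp⟩
        | succ d ihd =>
          cases d with
          | zero =>
            intro B C g G'
            refine ⟨B + pS ^ mm • g 0, C, G', 1, 1, isUnit_one, isUnit_one, ?_⟩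
            rw [one_mul, mul_one]
            have e2 : (2:ℕ) + mm = mm + 2 := by omega
            have hB : π^2 • ((B + pS ^ mm • g 0).map σ)
                = π^2 • B.map σ + π^(mm+2) • (g 0).map σ := by
              rw [mapadd, mapsmul, map_pow, smul_add, smul_smul, hπdef, ← pow_add, e2,
                ← hπdef]
            have hsum1 : (∑ i : Fin (0+1), τ ^ (i : ℕ) • (g i).map σ) = (g 0).map σ := by
              rw [Fin.sum_univ_one]
              simp
            rw [hsum1]
            simp only [auxForm, hB]
            abel
          | succ d1 =>
            intro B C g G'
            have hKmap : (A₀ + pS^2 • B).map σ = A₀.map σ + π^2 • B.map σ := by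
              rw [mapadd, mapsmul, map_pow, hπdef]
            set L : Matrix n n R := ∑ i : Fin (d1 + 1), τ ^ (i : ℕ) • (g i.succ).map σ
              with hL
            have hsum : ∑ i : Fin (d1 + 2), τ ^ (i : ℕ) • (g i).map σ
                = (g 0).map σ + τ • L := by
              rw [Fin.sum_univ_succ, hL, Finset.smul_sum]
              simp only [Fin.val_zero, pow_zero, one_smul, Fin.val_succ, smul_smul]
              congr 1
              refine Finset.sum_congr rfl fun i _ => ?_
              rw [pow_succ]
              ring_nf
            have hsum' : ∑ i : Fin (d1 + 1), τ ^ (i : ℕ) •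
                  ((Fin.cases (g 0 + (A₀ + pS^2 • B) * g 1)
                    (fun i' => (A₀ + pS^2 • B) * g i'.succ.succ) i : Matrix n n S)).map σ
                = (g 0).map σ + ((A₀ + pS^2 • B).map σ) * L := by
              simp only [hL, Fin.sum_univ_succ, Fin.cases_zero, Fin.cases_succ,
                Fin.val_zero, pow_zero, one_smul, Fin.val_succ, Fin.succ_zero_eq_one,
                Finset.mul_sum, mul_add, mapadd, mapsmul, map_pow, Matrix.map_mul, mul_smul_comm,
                ← hπdef]
              abel
            have hkey := aux_stepB π τ mm (A₀.map σ + π^2 • B.map σ) (C.map σ)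
              ((g 0).map σ) L G'
            obtain ⟨B', C', G'', u', v', hu', hv', hmain⟩ := ihd B C
              (fun i => Fin.cases (g 0 + (A₀ + pS^2 • B) * g 1)
                (fun i' => (A₀ + pS^2 • B) * g i'.succ.succ) i)
              (G' + π • (τ • ((C.map σ) * L))
                + π^(mm+1) • (((g 0).map σ + τ • L) * L) + π^(mm+2) • (G' * L))
            refine ⟨B', C', G'', u', (1 + π^(mm+2) • L) * v', hu',
              (hunit (mm+2) (by omega) L).mul hv', ?_⟩
            have hform : auxForm σ τ π A₀ B C
                = (A₀.map σ + π^2 • B.map σ) + τ • (π^2 • C.map σ) - τ • 1 := rfl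
            calc u' * (auxForm σ τ π A₀ B C
                    + π^(mm+2) • (∑ i : Fin (d1+2), τ ^ (i : ℕ) • (g i).map σ)
                    + π^(mm+3) • G') * ((1 + π^(mm+2) • L) * v')
                = u' * ((auxForm σ τ π A₀ B C
                    + π^(mm+2) • (∑ i : Fin (d1+2), τ ^ (i : ℕ) • (g i).map σ)
                    + π^(mm+3) • G') * (1 + π^(mm+2) • L)) * v' := by
                  rw [mul_assoc, mul_assoc, mul_assoc]
              _ = auxForm σ τ π A₀ B' C' + π^(mm+3) • G'' := by
                  rw [hsum, hform, hkey, ← hmain, hsum', hKmap, hform]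
      obtain ⟨d, g, hG⟩ := hrep G
      obtain ⟨B', C', G'', u, v, hu, hv, hkey⟩ := step d B C g 0
      obtain ⟨B'', C'', u', v', hu', hv', hkey'⟩ := ih (mm + 3)
        (by omega) (by omega) B' C' G''
      refine ⟨B'', C'', u' * u, v * v', hu'.mul hu, hv.mul hv', ?_⟩
      rw [smul_zero, add_zero] at hkey
      have e1 : u' * u * (auxForm σ τ π A₀ B C + π ^ (mm+2) • G) * (v * v')
          = u' * (u * (auxForm σ τ π A₀ B C + π ^ (mm+2) • G) * v) * v' := by
        noncomm_ring
      rw [e1, hG, hkey]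
      simpa using hkey'
  intro m hm B C G
  exact main ν m (by omega) hm B C G

lemma aux_blockElim {R : Type*} [CommRing R] {n₁ n₂ : Type*} [Fintype n₁] [Fintype n₂]
    [DecidableEq n₁] [DecidableEq n₂]
    (A : Matrix n₁ n₁ R) (Bm : Matrix n₁ n₂ R) (Cm : Matrix n₂ n₁ R) (Dm : Matrix n₂ n₂ R)
    (hD : IsUnit Dm) :
    ∃ U V : Matrix (n₁ ⊕ n₂) (n₁ ⊕ n₂) R, IsUnit U ∧ IsUnit V ∧
      U * Matrix.fromBlocks A Bm Cm Dm * V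
        = Matrix.fromBlocks (A - Bm * ((hD.unit⁻¹ : Units _) : Matrix n₂ n₂ R) * Cm) 0 0 1 := by
  set Di : Matrix n₂ n₂ R := ((hD.unit⁻¹ : Units _) : Matrix n₂ n₂ R) with hDi
  have hDD : Dm * Di = 1 := hD.mul_val_inv
  have hDD' : Di * Dm = 1 := hD.val_inv_mul
  have hU1 : Matrix.fromBlocks (1 : Matrix n₁ n₁ R) (-(Bm * Di)) (0 : Matrix n₂ n₁ R) 1
      * Matrix.fromBlocks (1 : Matrix n₁ n₁ R) (Bm * Di) (0 : Matrix n₂ n₁ R) 1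
      = (1 : Matrix (n₁ ⊕ n₂) (n₁ ⊕ n₂) R) := by
    rw [Matrix.fromBlocks_multiply, ← Matrix.fromBlocks_one]
    congr 1 <;> simp
  have hU2 : Matrix.fromBlocks (1 : Matrix n₁ n₁ R) (Bm * Di) (0 : Matrix n₂ n₁ R) 1
      * Matrix.fromBlocks (1 : Matrix n₁ n₁ R) (-(Bm * Di)) (0 : Matrix n₂ n₁ R) 1
      = (1 : Matrix (n₁ ⊕ n₂) (n₁ ⊕ n₂) R) := by
    rw [Matrix.fromBlocks_multiply, ← Matrix.fromBlocks_one]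
    congr 1 <;> simp
  have hV1 : Matrix.fromBlocks (1 : Matrix n₁ n₁ R) (0 : Matrix n₁ n₂ R) (-(Di * Cm)) Di
      * Matrix.fromBlocks (1 : Matrix n₁ n₁ R) (0 : Matrix n₁ n₂ R) Cm Dm
      = (1 : Matrix (n₁ ⊕ n₂) (n₁ ⊕ n₂) R) := by
    rw [Matrix.fromBlocks_multiply, ← Matrix.fromBlocks_one]
    congr 1 <;> simp [Matrix.mul_assoc, hDD', hDD]
  have hV2 : Matrix.fromBlocks (1 : Matrix n₁ n₁ R) (0 : Matrix n₁ n₂ R) Cm Dm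
      * Matrix.fromBlocks (1 : Matrix n₁ n₁ R) (0 : Matrix n₁ n₂ R) (-(Di * Cm)) Di
      = (1 : Matrix (n₁ ⊕ n₂) (n₁ ⊕ n₂) R) := by
    rw [Matrix.fromBlocks_multiply, ← Matrix.fromBlocks_one]
    congr 1 <;> simp [Matrix.mul_assoc, ← Matrix.mul_assoc Dm Di Cm, hDD', hDD]
  refine ⟨Matrix.fromBlocks 1 (-(Bm * Di)) (0 : Matrix n₂ n₁ R) 1,
    Matrix.fromBlocks 1 (0 : Matrix n₁ n₂ R) (-(Di * Cm)) Di,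
    ⟨⟨_, _, hU1, hU2⟩, rfl⟩, ⟨⟨_, _, hV1, hV2⟩, rfl⟩, ?_⟩
  rw [Matrix.fromBlocks_multiply, Matrix.fromBlocks_multiply, Matrix.fromBlocks_inj]
  refine ⟨?_, ?_, ?_, ?_⟩
  · simp [Matrix.sub_mul, Matrix.add_mul, Matrix.mul_assoc, hDD, hDD', sub_eq_add_neg]
  · simp [Matrix.sub_mul, Matrix.add_mul, Matrix.mul_assoc, hDD, hDD']
  · simp [Matrix.sub_mul, Matrix.add_mul, Matrix.mul_assoc, hDD, hDD',
      ← Matrix.mul_assoc Dm Di Cm]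
  · simp [Matrix.sub_mul, Matrix.add_mul, Matrix.mul_assoc, hDD, hDD']

lemma aux_coker_block {R : Type*} [CommRing R] {α β γ : Type*} [Fintype α] [DecidableEq α]
    [Fintype β] [DecidableEq β] [Fintype γ] [DecidableEq γ]
    (ee : (β ⊕ γ) ≃ α) (Z : Matrix β β R) :
    Nonempty (((α → R) ⧸ LinearMap.range
        ((Matrix.fromBlocks Z 0 0 (1 : Matrix γ γ R)).submatrix ee.symm ee.symm).mulVecLin)
      ≃ₗ[R] ((β → R) ⧸ LinearMap.range Z.mulVecLin)) := by
  set Wb : Matrix (β ⊕ γ) (β ⊕ γ) R := Matrix.fromBlocks Z 0 0 (1 : Matrix γ γ R) with hWb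
  set Wm : Matrix α α R := Wb.submatrix ee.symm ee.symm with hWm
  set f : β → α := fun b => ee (Sum.inl b) with hf
  have hfinj : Function.Injective f := fun a b h => Sum.inl_injective (ee.injective h)
  set φ : (α → R) →ₗ[R] ((β → R) ⧸ LinearMap.range Z.mulVecLin) :=
    (LinearMap.range Z.mulVecLin).mkQ ∘ₗ LinearMap.funLeft R R f with hφ
  have hφsurj : Function.Surjective φ :=
    (Submodule.mkQ_surjective _).comp (LinearMap.funLeft_surjective_of_injective R R f hfinj)
  -- compute mulVec of Wm
  have hWmv : ∀ v : α → R, Wm.mulVec v = (Wb.mulVec (v ∘ ee)) ∘ ee.symm := by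
    intro v
    rw [hWm, Matrix.submatrix_mulVec_equiv]
    rfl
  have hker : LinearMap.ker φ = LinearMap.range Wm.mulVecLin := by
    ext x
    simp only [LinearMap.mem_ker, hφ, LinearMap.comp_apply, Submodule.mkQ_apply,
      Submodule.Quotient.mk_eq_zero, LinearMap.mem_range, Matrix.mulVecLin_apply]
    constructor
    · rintro ⟨y, hy⟩
      refine ⟨(Sum.elim y (fun c => x (ee (Sum.inr c)))) ∘ ee.symm, ?_⟩
      rw [hWmv]
      funext s
      have hcomp : ((Sum.elim y fun c => x (ee (Sum.inr c))) ∘ ⇑ee.symm) ∘ ⇑ee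
          = Sum.elim y (fun c => x (ee (Sum.inr c))) := by
        funext t; simp
      rw [hcomp]
      have : Wb.mulVec (Sum.elim y fun c => x (ee (Sum.inr c)))
          = Sum.elim (Z.mulVec y) (fun c => x (ee (Sum.inr c))) := by
        rw [hWb, Matrix.fromBlocks_mulVec]
        congr 1 <;> funext t <;> simp [Matrix.zero_mulVec, Matrix.one_mulVec]
      rw [this]
      rcases hc : ee.symm s with b | c
      · have hs : s = ee (Sum.inl b) := by rw [← hc, Equiv.apply_symm_apply]
        have := congrFun hy b
        simp only [LinearMap.funLeft_apply] at this
        simp [hs, ← hf, this]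
        rfl
      · have hs : s = ee (Sum.inr c) := by rw [← hc, Equiv.apply_symm_apply]
        simp [hs]
    · rintro ⟨v, hv⟩
      refine ⟨(v ∘ ee) ∘ Sum.inl, ?_⟩
      funext b
      have := congrFun (hWmv v) (ee (Sum.inl b))
      rw [← hv]
      simp only [LinearMap.funLeft_apply]
      rw [this]
      simp only [Function.comp_apply, Equiv.symm_apply_apply]
      rw [hWb, Matrix.fromBlocks_mulVec]
      simp [Matrix.zero_mulVec]
  exact ⟨(Submodule.quotEquivOfEq _ _ hker.symm).trans
    (φ.quotKerEquivOfSurjective hφsurj)⟩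

lemma aux_isUnit_submatrix_equiv {R : Type*} [CommRing R] {m n' : Type*} [Fintype m]
    [DecidableEq m] [Fintype n'] [DecidableEq n'] (e : m ≃ n') (M : Matrix n' n' R)
    (h : IsUnit M) : IsUnit (M.submatrix e e) := by
  refine ⟨⟨M.submatrix e e, ((h.unit⁻¹ : Units _) : Matrix n' n' R).submatrix e e, ?_, ?_⟩, rfl⟩
  · rw [Matrix.submatrix_mul_equiv, IsUnit.mul_val_inv, Matrix.submatrix_one_equiv]
  · rw [Matrix.submatrix_mul_equiv, IsUnit.val_inv_mul, Matrix.submatrix_one_equiv]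

lemma aux_isUnit_fromBlocks_diag {R : Type*} [CommRing R] {n₁ n₂ : Type*} [Fintype n₁]
    [DecidableEq n₁] [Fintype n₂] [DecidableEq n₂] (u : Matrix n₁ n₁ R) (hu : IsUnit u) :
    IsUnit (Matrix.fromBlocks u 0 0 (1 : Matrix n₂ n₂ R)) := by
  refine ⟨⟨Matrix.fromBlocks u 0 0 (1 : Matrix n₂ n₂ R),
    Matrix.fromBlocks ((hu.unit⁻¹ : Units _) : Matrix n₁ n₁ R) 0 0 1, ?_, ?_⟩, rfl⟩
  · rw [Matrix.fromBlocks_multiply, ← Matrix.fromBlocks_one]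
    congr 1 <;>
      simp [Matrix.mul_nonsing_inv _ ((Matrix.isUnit_iff_isUnit_det _).mp hu),
        Matrix.nonsing_inv_mul _ ((Matrix.isUnit_iff_isUnit_det _).mp hu)]
  · rw [Matrix.fromBlocks_multiply, ← Matrix.fromBlocks_one]
    congr 1 <;>
      simp [Matrix.mul_nonsing_inv _ ((Matrix.isUnit_iff_isUnit_det _).mp hu),
        Matrix.nonsing_inv_mul _ ((Matrix.isUnit_iff_isUnit_det _).mp hu)]
set_option maxHeartbeats 1000000 in
/-- Block diagonalization over `R_j = (ℤ/p^{N+1})[t]/(P_j)`: if `X = D + pE` with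
`D = diag(J_1, …, J_l, M)` and all diagonal blocks except the `j`-th become
invertible over `R_j` after subtracting `t̄·id`, then `X - t̄ Iₙ` can be transformed
by invertible matrices over `R_j` into a block diagonal matrix whose `j`-th block is
`pA_{jj} + J_j - t̄·id + p²B + t̄p²C` and whose other blocks are invertible; hence
the two cokernels over `R_j` are isomorphic. -/
theorem stmt_18 (p : ℕ) [Fact p.Prime] (N : ℕ) (l : ℕ)
    (nn : Fin (l + 1) → ℕ)
    (J : (k : Fin (l + 1)) → Matrix (Fin (nn k)) (Fin (nn k)) (ZMod (p ^ (N + 1))))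
    (Pj : Polynomial (ZMod (p ^ (N + 1)))) (hPj : Pj.Monic)
    (j : Fin (l + 1))
    (hinv : ∀ k, k ≠ j → IsUnit
      ((J k).map (algebraMap (ZMod (p ^ (N + 1))) (AdjoinRoot Pj)) - AdjoinRoot.root Pj • 1))
    (D E X : Matrix ((k : Fin (l + 1)) × Fin (nn k)) ((k : Fin (l + 1)) × Fin (nn k))
      (ZMod (p ^ (N + 1))))
    (hD1 : ∀ (k : Fin (l + 1)) (a b : Fin (nn k)), D ⟨k, a⟩ ⟨k, b⟩ = J k a b)
    (hD2 : ∀ (k k' : Fin (l + 1)), k ≠ k' → ∀ (a : Fin (nn k)) (b : Fin (nn k')),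
      D ⟨k, a⟩ ⟨k', b⟩ = 0)
    (hX : X = D + (p : ZMod (p ^ (N + 1))) • E) :
    ∃ (B C : Matrix (Fin (nn j)) (Fin (nn j)) (ZMod (p ^ (N + 1)))),
      ∃ (Z : Matrix (Fin (nn j)) (Fin (nn j)) (AdjoinRoot Pj)),
      Z = (J j + (p : ZMod (p ^ (N + 1))) •
            (Matrix.of fun a b => E ⟨j, a⟩ ⟨j, b⟩)).map
              (algebraMap (ZMod (p ^ (N + 1))) (AdjoinRoot Pj))
          - AdjoinRoot.root Pj • 1
          + ((p : AdjoinRoot Pj) ^ 2) • B.map (algebraMap (ZMod (p ^ (N + 1))) (AdjoinRoot Pj))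
          + AdjoinRoot.root Pj • (((p : AdjoinRoot Pj) ^ 2) •
              C.map (algebraMap (ZMod (p ^ (N + 1))) (AdjoinRoot Pj))) ∧
      ∃ (W U V : Matrix ((k : Fin (l + 1)) × Fin (nn k)) ((k : Fin (l + 1)) × Fin (nn k))
          (AdjoinRoot Pj)),
        IsUnit U ∧ IsUnit V ∧
        U * (X.map (algebraMap (ZMod (p ^ (N + 1))) (AdjoinRoot Pj))
          - AdjoinRoot.root Pj • 1) * V = W ∧
        (∀ (k k' : Fin (l + 1)), k ≠ k' → ∀ (a : Fin (nn k)) (b : Fin (nn k')),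
          W ⟨k, a⟩ ⟨k', b⟩ = 0) ∧
        (∀ a b : Fin (nn j), W ⟨j, a⟩ ⟨j, b⟩ = Z a b) ∧
        (∀ k, k ≠ j → IsUnit (Matrix.of fun a b : Fin (nn k) => W ⟨k, a⟩ ⟨k, b⟩)) ∧
        Nonempty (((((k : Fin (l + 1)) × Fin (nn k)) → AdjoinRoot Pj) ⧸
            LinearMap.range (X.map (algebraMap (ZMod (p ^ (N + 1))) (AdjoinRoot Pj))
              - AdjoinRoot.root Pj • 1).mulVecLin) ≃ₗ[AdjoinRoot Pj]
          ((Fin (nn j) → AdjoinRoot Pj) ⧸ LinearMap.range Z.mulVecLin)) := by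
  classical
  set σ : ZMod (p ^ (N + 1)) →+* AdjoinRoot Pj :=
    algebraMap (ZMod (p ^ (N + 1))) (AdjoinRoot Pj) with hσ
  set τ : AdjoinRoot Pj := AdjoinRoot.root Pj with hτ
  -- basic facts
  have hπdef : ((p : AdjoinRoot Pj)) = σ ((p : ℕ) : ZMod (p ^ (N + 1))) := (map_natCast σ p).symm
  have hnilR : ((p : AdjoinRoot Pj)) ^ (N + 1) = 0 := by
    rw [hπdef, ← map_pow, ← Nat.cast_pow, ZMod.natCast_self, map_zero]
  have hgen : ∀ r : AdjoinRoot Pj, ∃ q : Polynomial (ZMod (p ^ (N + 1))), r = q.eval₂ σ τ := by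
    intro r
    obtain ⟨q, hq⟩ := AdjoinRoot.mk_surjective r
    exact ⟨q, by rw [← hq, ← AdjoinRoot.aeval_eq, Polynomial.aeval_def]⟩
  set Ej : Matrix (Fin (nn j)) (Fin (nn j)) (ZMod (p ^ (N + 1))) :=
    Matrix.of fun a b => E ⟨j, a⟩ ⟨j, b⟩ with hEj
  set A₀ : Matrix (Fin (nn j)) (Fin (nn j)) (ZMod (p ^ (N + 1))) :=
    J j + (p : ZMod (p ^ (N + 1))) • Ej with hA₀
  set Y : Matrix ((k : Fin (l + 1)) × Fin (nn k)) ((k : Fin (l + 1)) × Fin (nn k))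
    (AdjoinRoot Pj) := X.map σ - τ • 1 with hY
  -- the index equivalence
  set fj : {s : (k : Fin (l + 1)) × Fin (nn k) // s.1 = j} ≃ Fin (nn j) :=
    { toFun := fun s => Fin.cast (congrArg nn s.2) s.1.2
      invFun := fun a => ⟨⟨j, a⟩, rfl⟩
      left_inv := by rintro ⟨⟨k, a⟩, h⟩; cases h; rfl
      right_inv := fun a => rfl } with hfj
  set ee : (Fin (nn j) ⊕ {s : (k : Fin (l + 1)) × Fin (nn k) // ¬ s.1 = j})
      ≃ (k : Fin (l + 1)) × Fin (nn k) :=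
    (Equiv.sumCongr fj.symm (Equiv.refl _)).trans
      (Equiv.sumCompl (fun s : (k : Fin (l + 1)) × Fin (nn k) => s.1 = j)) with heedef
  have hee1 : ∀ a : Fin (nn j), ee (Sum.inl a) = ⟨j, a⟩ := fun a => rfl
  have hee2 : ∀ s : {s : (k : Fin (l + 1)) × Fin (nn k) // ¬ s.1 = j}, ee (Sum.inr s) = s.1 :=
    fun s => rfl
  have hee1' : ∀ a : Fin (nn j), ee.symm ⟨j, a⟩ = Sum.inl a := fun a =>
    (Equiv.symm_apply_eq ee).mpr (hee1 a).symm
  have hee2' : ∀ (s : (k : Fin (l + 1)) × Fin (nn k)) (h : ¬ s.1 = j),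
      ee.symm s = Sum.inr ⟨s, h⟩ := fun s h =>
    (Equiv.symm_apply_eq ee).mpr (hee2 ⟨s, h⟩).symm
  -- the blocks of Y
  set Yb := Y.submatrix ee ee with hYb
  set Ab := Yb.toBlocks₁₁ with hAb
  set Bb := Yb.toBlocks₁₂ with hBb
  set Cb := Yb.toBlocks₂₁ with hCb
  set Db := Yb.toBlocks₂₂ with hDb
  have hYblocks : Yb = Matrix.fromBlocks Ab Bb Cb Db := (Matrix.fromBlocks_toBlocks Yb).symm
  have hXmap : X.map σ = D.map σ + (p : AdjoinRoot Pj) • E.map σ := by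
    rw [hX]
    ext s s'
    simp only [Matrix.map_apply, Matrix.add_apply, Matrix.smul_apply, smul_eq_mul,
      map_add, _root_.map_mul]
    rw [← hπdef]
  -- invertibility of the lower-right block
  set eq2 : ((k : {k : Fin (l + 1) // k ≠ j}) × Fin (nn k.1))
      ≃ {s : (k : Fin (l + 1)) × Fin (nn k) // ¬ s.1 = j} :=
    { toFun := fun s => ⟨⟨s.1.1, s.2⟩, s.1.2⟩
      invFun := fun s => ⟨⟨s.1.1, s.2⟩, s.1.2⟩
      left_inv := fun s => rfl
      right_inv := fun s => rfl } with heq2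
  set Dγ := Matrix.blockDiagonal' (fun k : {k : Fin (l + 1) // k ≠ j} =>
    (J k.1).map σ - τ • 1) with hDγ
  have hDγunit : IsUnit Dγ := by
    refine ⟨⟨Dγ, Matrix.blockDiagonal'
      (fun k : {k : Fin (l + 1) // k ≠ j} =>
        (((hinv k.1 k.2).unit⁻¹ : Units _) : Matrix (Fin (nn k.1)) _ (AdjoinRoot Pj))),
      ?_, ?_⟩, rfl⟩
    · rw [hDγ, ← Matrix.blockDiagonal'_mul]
      have h9 : (fun k : {k : Fin (l + 1) // k ≠ j} => ((J k.1).map σ - τ • 1) *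
          (((hinv k.1 k.2).unit⁻¹ : Units _) : Matrix (Fin (nn k.1)) (Fin (nn k.1))
            (AdjoinRoot Pj)))
          = fun k => 1 := funext fun k => (hinv k.1 k.2).mul_val_inv
      rw [h9]
      exact Matrix.blockDiagonal'_one
    · rw [hDγ, ← Matrix.blockDiagonal'_mul]
      have h9 : (fun k : {k : Fin (l + 1) // k ≠ j} =>
          (((hinv k.1 k.2).unit⁻¹ : Units _) : Matrix (Fin (nn k.1)) (Fin (nn k.1))
            (AdjoinRoot Pj))
          * ((J k.1).map σ - τ • 1)) = fun k => 1 := funext fun k =>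
        (hinv k.1 k.2).val_inv_mul
      rw [h9]
      exact Matrix.blockDiagonal'_one
  set E0 : Matrix {s : (k : Fin (l + 1)) × Fin (nn k) // ¬ s.1 = j}
      {s : (k : Fin (l + 1)) × Fin (nn k) // ¬ s.1 = j} (AdjoinRoot Pj) :=
    Matrix.of fun s s' => σ (E s.1 s'.1) with hE0
  have hDbsplit : Db = Dγ.submatrix eq2.symm eq2.symm + (p : AdjoinRoot Pj) • E0 := by
    ext s s'
    rcases s with ⟨⟨k, a⟩, hk⟩
    rcases s' with ⟨⟨k', b⟩, hk'⟩
    have hYent : Db ⟨⟨k, a⟩, hk⟩ ⟨⟨k', b⟩, hk'⟩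
        = σ (D ⟨k, a⟩ ⟨k', b⟩) + (p : AdjoinRoot Pj) * σ (E ⟨k, a⟩ ⟨k', b⟩)
          - τ * (1 : Matrix ((k : Fin (l + 1)) × Fin (nn k)) ((k : Fin (l + 1)) × Fin (nn k))
            (AdjoinRoot Pj)) ⟨k, a⟩ ⟨k', b⟩ := by
      simp [hDb, Matrix.toBlocks₂₂, hYb, hY, hXmap, Matrix.map_apply, hee2]
    rw [hYent, Matrix.add_apply, Matrix.smul_apply]
    by_cases hkk : k = k'
    · subst hkk
      have h1 : Dγ.submatrix eq2.symm eq2.symm ⟨⟨k, a⟩, hk⟩ ⟨⟨k, b⟩, hk'⟩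
        = σ (J k a b) - τ * (if a = b then 1 else 0) := by
        simp only [Matrix.submatrix_apply, heq2, Equiv.coe_fn_symm_mk, hDγ]
        rw [show (⟨⟨k, hk'⟩, b⟩ : (k : {k : Fin (l + 1) // k ≠ j}) × Fin (nn k.1))
          = ⟨⟨k, hk⟩, b⟩ by rfl]
        rw [Matrix.blockDiagonal'_apply_eq]
        simp [Matrix.map_apply, Matrix.one_apply, mul_ite, mul_one, mul_zero]
      rw [h1, hD1]
      have h2 : (1 : Matrix ((k : Fin (l + 1)) × Fin (nn k)) ((k : Fin (l + 1)) × Fin (nn k))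
            (AdjoinRoot Pj)) ⟨k, a⟩ ⟨k, b⟩
          = if a = b then 1 else 0 := by
        simp [Matrix.one_apply]
      rw [h2]
      simp [hE0]
      ring
    · have h1 : Dγ.submatrix eq2.symm eq2.symm ⟨⟨k, a⟩, hk⟩ ⟨⟨k', b⟩, hk'⟩ = 0 := by
        simp only [Matrix.submatrix_apply, heq2, Equiv.coe_fn_symm_mk, hDγ]
        exact Matrix.blockDiagonal'_apply_ne _ _ _ (fun hc => hkk (congrArg Subtype.val hc))
      have h2 : (1 : Matrix ((k : Fin (l + 1)) × Fin (nn k)) ((k : Fin (l + 1)) × Fin (nn k))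
            (AdjoinRoot Pj)) ⟨k, a⟩ ⟨k', b⟩
          = 0 := Matrix.one_apply_ne (fun hc => hkk (congrArg Sigma.fst hc))
      rw [h1, h2, hD2 k k' hkk]
      simp [hE0]
  have hDbunit : IsUnit Db := by
    rw [hDbsplit]
    exact aux_isUnit_add_nilpotent_smul ⟨N + 1, hnilR⟩ _ _
      (aux_isUnit_submatrix_equiv eq2.symm Dγ hDγunit)
  -- 2x2 block elimination
  obtain ⟨U₂, V₂, hU₂, hV₂, helim⟩ := aux_blockElim Ab Bb Cb Db hDbunit
  -- identify the blocks
  have hAbval : Ab = A₀.map σ - τ • 1 := by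
    ext a b
    have h3 : Ab a b = σ (X ⟨j, a⟩ ⟨j, b⟩)
        - τ * (1 : Matrix ((k : Fin (l + 1)) × Fin (nn k)) ((k : Fin (l + 1)) × Fin (nn k))
          (AdjoinRoot Pj)) ⟨j, a⟩ ⟨j, b⟩ := by
      simp [hAb, Matrix.toBlocks₁₁, hYb, hY, Matrix.map_apply, hee1]
    rw [h3, hX]
    have h4 : (1 : Matrix ((k : Fin (l + 1)) × Fin (nn k)) ((k : Fin (l + 1)) × Fin (nn k))
        (AdjoinRoot Pj)) ⟨j, a⟩ ⟨j, b⟩ = (1 : Matrix (Fin (nn j)) (Fin (nn j))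
          (AdjoinRoot Pj)) a b := by
      simp [Matrix.one_apply]
    rw [h4]
    simp only [Matrix.sub_apply, Matrix.map_apply, hA₀, Matrix.add_apply, Matrix.smul_apply,
      smul_eq_mul, map_add, _root_.map_mul, hEj, Matrix.of_apply]
    rw [← hπdef, hD1]
  set Eb : Matrix (Fin (nn j)) {s : (k : Fin (l + 1)) × Fin (nn k) // ¬ s.1 = j}
      (AdjoinRoot Pj) := Matrix.of fun a s => σ (E ⟨j, a⟩ s.1) with hEb
  set Ec : Matrix {s : (k : Fin (l + 1)) × Fin (nn k) // ¬ s.1 = j} (Fin (nn j))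
      (AdjoinRoot Pj) := Matrix.of fun s a => σ (E s.1 ⟨j, a⟩) with hEc
  have hBbval : Bb = (p : AdjoinRoot Pj) • Eb := by
    ext a s
    have h3 : Bb a s = σ (X ⟨j, a⟩ s.1)
        - τ * (1 : Matrix ((k : Fin (l + 1)) × Fin (nn k)) ((k : Fin (l + 1)) × Fin (nn k))
          (AdjoinRoot Pj)) ⟨j, a⟩ s.1 := by
      simp [hBb, Matrix.toBlocks₁₂, hYb, hY, Matrix.map_apply, hee1, hee2]
    have h4 : (1 : Matrix ((k : Fin (l + 1)) × Fin (nn k)) ((k : Fin (l + 1)) × Fin (nn k))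
        (AdjoinRoot Pj)) ⟨j, a⟩ s.1 = 0 :=
      Matrix.one_apply_ne (fun hc => s.2 (congrArg Sigma.fst hc).symm)
    rw [h3, h4, hX]
    simp only [Matrix.add_apply, Matrix.smul_apply, smul_eq_mul, map_add, _root_.map_mul,
      Matrix.smul_apply, hEb, Matrix.of_apply]
    rw [hD2 j s.1.1 (fun hc => s.2 hc.symm) a s.1.2, ← hπdef]
    simp
  have hCbval : Cb = (p : AdjoinRoot Pj) • Ec := by
    ext s a
    have h3 : Cb s a = σ (X s.1 ⟨j, a⟩)
        - τ * (1 : Matrix ((k : Fin (l + 1)) × Fin (nn k)) ((k : Fin (l + 1)) × Fin (nn k))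
          (AdjoinRoot Pj)) s.1 ⟨j, a⟩ := by
      simp [hCb, Matrix.toBlocks₂₁, hYb, hY, Matrix.map_apply, hee1, hee2]
    have h4 : (1 : Matrix ((k : Fin (l + 1)) × Fin (nn k)) ((k : Fin (l + 1)) × Fin (nn k))
        (AdjoinRoot Pj)) s.1 ⟨j, a⟩ = 0 :=
      Matrix.one_apply_ne (fun hc => s.2 (congrArg Sigma.fst hc))
    rw [h3, h4, hX]
    simp only [Matrix.add_apply, Matrix.smul_apply, smul_eq_mul, map_add, _root_.map_mul,
      Matrix.smul_apply, hEc, Matrix.of_apply]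
    rw [hD2 s.1.1 j s.2 s.1.2 a, ← hπdef]
    simp
  -- the Schur complement in the `auxForm` shape
  set Di := ((hDbunit.unit⁻¹ : Units _) :
    Matrix {s : (k : Fin (l + 1)) × Fin (nn k) // ¬ s.1 = j}
      {s : (k : Fin (l + 1)) × Fin (nn k) // ¬ s.1 = j} (AdjoinRoot Pj)) with hDi
  have hSbval : Ab - Bb * Di * Cb
      = auxForm σ τ (p : AdjoinRoot Pj) A₀ 0 0
        + ((p : AdjoinRoot Pj))^2 • (-(Eb * Di * Ec)) := by
    have hform0 : auxForm σ τ (p : AdjoinRoot Pj) A₀ 0 0 = A₀.map σ - τ • 1 := by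
      have hz : ((0 : Matrix (Fin (nn j)) (Fin (nn j)) (ZMod (p ^ (N + 1))))).map σ = 0 := by
        ext a b; simp
      simp [auxForm, hz]
    have hcorr : ((p : AdjoinRoot Pj) • Eb) * Di * ((p : AdjoinRoot Pj) • Ec)
        = ((p : AdjoinRoot Pj))^2 • (Eb * Di * Ec) := by
      rw [Matrix.smul_mul, Matrix.smul_mul, Matrix.mul_smul, smul_smul, ← pow_two]
    rw [hform0, hAbval, hBbval, hCbval, hcorr, smul_neg]
    abel
  -- apply the reduction over the local ring
  obtain ⟨B', C', u, v, hu, hv, hclaim⟩ := aux_claim σ τ (p : AdjoinRoot Pj)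
    ((p : ℕ) : ZMod (p ^ (N + 1))) hπdef (N + 1) (by omega) hnilR hgen A₀ 2 le_rfl 0 0
    (-(Eb * Di * Ec))
  rw [← hSbval] at hclaim
  set Zm := auxForm σ τ (p : AdjoinRoot Pj) A₀ B' C' with hZm
  -- assemble the final transformation
  set Fu := Matrix.fromBlocks u 0 0
    (1 : Matrix {s : (k : Fin (l + 1)) × Fin (nn k) // ¬ s.1 = j}
      {s : (k : Fin (l + 1)) × Fin (nn k) // ¬ s.1 = j} (AdjoinRoot Pj)) with hFu
  set Fv := Matrix.fromBlocks v 0 0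
    (1 : Matrix {s : (k : Fin (l + 1)) × Fin (nn k) // ¬ s.1 = j}
      {s : (k : Fin (l + 1)) × Fin (nn k) // ¬ s.1 = j} (AdjoinRoot Pj)) with hFv
  have hFuU : IsUnit Fu := aux_isUnit_fromBlocks_diag u hu
  have hFvU : IsUnit Fv := aux_isUnit_fromBlocks_diag v hv
  set Ufin := (Fu * U₂).submatrix ee.symm ee.symm with hUfin
  set Vfin := (V₂ * Fv).submatrix ee.symm ee.symm with hVfin
  set Wfin := (Matrix.fromBlocks Zm 0 0
    (1 : Matrix {s : (k : Fin (l + 1)) × Fin (nn k) // ¬ s.1 = j}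
      {s : (k : Fin (l + 1)) × Fin (nn k) // ¬ s.1 = j} (AdjoinRoot Pj))).submatrix
        ee.symm ee.symm with hWfin
  have hUfinU : IsUnit Ufin := aux_isUnit_submatrix_equiv ee.symm _ (hFuU.mul hU₂)
  have hVfinU : IsUnit Vfin := aux_isUnit_submatrix_equiv ee.symm _ (hV₂.mul hFvU)
  have hYsub : Y = Yb.submatrix ee.symm ee.symm := by
    ext s s'
    simp [hYb, Matrix.submatrix_apply]
  have hinner : Fu * U₂ * Yb * (V₂ * Fv) = Matrix.fromBlocks Zm 0 0 1 := by
    have hassoc : Fu * U₂ * Yb * (V₂ * Fv) = Fu * (U₂ * Yb * V₂) * Fv := by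
      noncomm_ring
    rw [hassoc, hYblocks, helim]
    have e1 : Fu * Matrix.fromBlocks (Ab - Bb * Di * Cb) 0 0 1
        = Matrix.fromBlocks (u * (Ab - Bb * Di * Cb)) 0 0 1 := by
      rw [hFu, Matrix.fromBlocks_multiply]
      rw [Matrix.fromBlocks_inj]
      refine ⟨by simp, by simp, by simp, by simp⟩
    have e2 : Matrix.fromBlocks (u * (Ab - Bb * Di * Cb)) 0 0 1 * Fv
        = Matrix.fromBlocks (u * (Ab - Bb * Di * Cb) * v) 0 0 1 := by
      rw [hFv, Matrix.fromBlocks_multiply]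
      rw [Matrix.fromBlocks_inj]
      refine ⟨by simp [Matrix.mul_assoc], by simp, by simp, by simp⟩
    rw [e1, e2, hclaim]
  have hprod : Ufin * Y * Vfin = Wfin := by
    rw [hUfin, hVfin, hYsub, Matrix.submatrix_mul_equiv (Fu * U₂) Yb _ ee.symm _,
      Matrix.submatrix_mul_equiv _ (V₂ * Fv) _ ee.symm _, hinner, hWfin]
  -- finish
  refine ⟨B', C', Zm, ?_, Wfin, Ufin, Vfin, hUfinU, hVfinU, hprod, ?_, ?_, ?_, ?_⟩
  · rw [hZm]
    simp only [auxForm]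
    abel
  · intro k k' hkk a b
    rw [hWfin, Matrix.submatrix_apply]
    by_cases hk : k = j
    · have hk2 : j = k := hk.symm
      subst hk2
      have hk' : ¬ (⟨k', b⟩ : (k : Fin (l + 1)) × Fin (nn k)).1 = j := fun hc => hkk hc.symm
      rw [hee1' a, hee2' ⟨k', b⟩ hk', Matrix.fromBlocks_apply₁₂]
      rfl
    · by_cases hk' : k' = j
      · subst hk'
        rw [hee2' ⟨k, a⟩ hk, hee1' b, Matrix.fromBlocks_apply₂₁]
        rfl
      · rw [hee2' ⟨k, a⟩ hk, hee2' ⟨k', b⟩ hk', Matrix.fromBlocks_apply₂₂]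
        exact Matrix.one_apply_ne (fun hc => hkk (congrArg (fun x => (Subtype.val x).1) hc))
  · intro a b
    rw [hWfin, Matrix.submatrix_apply, hee1' a, hee1' b, Matrix.fromBlocks_apply₁₁]
  · intro k hk
    have hmat : (Matrix.of fun a b : Fin (nn k) => Wfin ⟨k, a⟩ ⟨k, b⟩)
        = (1 : Matrix (Fin (nn k)) (Fin (nn k)) (AdjoinRoot Pj)) := by
      ext a b
      rw [Matrix.of_apply, hWfin, Matrix.submatrix_apply, hee2' ⟨k, a⟩ hk, hee2' ⟨k, b⟩ hk,
        Matrix.fromBlocks_apply₂₂]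
      by_cases hab : a = b
      · subst hab
        rw [Matrix.one_apply_eq, Matrix.one_apply_eq]
      · rw [Matrix.one_apply_ne (fun hc => hab (by
            have := congrArg Subtype.val hc
            simpa using this)), Matrix.one_apply_ne hab]
    rw [hmat]
    exact isUnit_one
  · obtain ⟨e1⟩ := aux_coker_equiv Y Ufin Vfin Wfin hUfinU hVfinU hprod
    obtain ⟨e2⟩ := aux_coker_block ee Zm
    exact ⟨e1.trans e2⟩
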